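/- arXiv:1703.10465 — 2 statements merged into one kernel-verified Lean document; each statement's English description precedes it below -/
import Mathlib

section
/- Let g₁,…,g_k be orientation-preserving homeomorphisms of S¹, let p₁,…,p_k be a probability vector, and suppose μ̃ is a Borel probability measure on S¹ satisfying μ̃ = Σᵢ pᵢ · (μ̃ ∘ gᵢ), i.e. μ̃ is invariant for the iterated function system generated by the inverses g₁⁻¹,…,g_k⁻¹. Define χ(x,y) = min(μ̃([x,y]), μ̃([y,x])) and let U f(x) = Σᵢ pᵢ f(gᵢ(x)) be the dual Markov operator. Then for any function f: S¹ → ℝ with |f(x) − f(y)| ≤ χ(x,y) for all x,y, the function Uf also satisfies |Uf(x) − Uf(y)| ≤ χ(x,y) for all x,y. -/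
open MeasureTheory Filter

abbrev Circle1 := AddCircle (1 : ℝ)

noncomputable def rep (u : Circle1) : ℝ := (AddCircle.equivIco 1 0 u : ℝ)

/-- The closed counterclockwise arc from `x` to `y`. -/
def arc (x y : Circle1) : Set Circle1 := {z | rep (z - x) ≤ rep (y - x)}

noncomputable def chi (μ : Measure Circle1) (x y : Circle1) : ℝ :=
  min (μ (arc x y)).toReal (μ (arc y x)).toReal


lemma rep_measurable : Measurable rep := by
  exact measurable_subtype_coe.comp (AddCircle.measurableEquivIco 1 0).measurable

lemma arc_measurable (x y : Circle1) : MeasurableSet (arc x y) := by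
  have : arc x y = (fun z => rep (z - x)) ⁻¹' Set.Iic (rep (y - x)) := rfl
  rw [this]
  exact (rep_measurable.comp (measurable_id.sub measurable_const)) measurableSet_Iic

/-- If `μ̃` is invariant for the inverse system, then the dual operator `U` is
nonexpansive for the metric `χ` built from `μ̃`. -/
theorem dual_operator_chi_nonexpansive (k : ℕ)
    (g : Fin k → Homeomorph Circle1 Circle1)
    (horient : ∀ i (x y : Circle1), (g i) '' arc x y = arc (g i x) (g i y))
    (p : Fin k → ℝ) (hp : ∀ i, 0 ≤ p i) (hp1 : ∑ i, p i = 1)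
    (μ : Measure Circle1) [IsProbabilityMeasure μ]
    (hinv : ∀ A : Set Circle1, MeasurableSet A →
      (μ A).toReal = ∑ i, p i * (μ ((g i) '' A)).toReal)
    (f : Circle1 → ℝ) (hf : ∀ x y, |f x - f y| ≤ chi μ x y) :
    ∀ x y, |(∑ i, p i * f (g i x)) - (∑ i, p i * f (g i y))| ≤ chi μ x y := by
  intro x y
  have hmA := arc_measurable x y
  have hmB := arc_measurable y x
  rw [← Finset.sum_sub_distrib]
  calc |∑ i, (p i * f (g i x) - p i * f (g i y))|
      ≤ ∑ i, |p i * f (g i x) - p i * f (g i y)| := Finset.abs_sum_le_sum_abs _ _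
    _ = ∑ i, p i * |f (g i x) - f (g i y)| := by
        refine Finset.sum_congr rfl fun i _ => ?_
        rw [← mul_sub, abs_mul, abs_of_nonneg (hp i)]
    _ ≤ ∑ i, p i * chi μ (g i x) (g i y) :=
        Finset.sum_le_sum fun i _ => mul_le_mul_of_nonneg_left (hf _ _) (hp i)
    _ ≤ chi μ x y := by
        apply le_min
        · rw [hinv _ hmA]
          refine Finset.sum_le_sum fun i _ => mul_le_mul_of_nonneg_left ?_ (hp i)
          rw [horient]
          exact min_le_left _ _
        · rw [hinv _ hmB]
          refine Finset.sum_le_sum fun i _ => mul_le_mul_of_nonneg_left ?_ (hp i)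
          rw [horient]
          exact min_le_right _ _
end

section
/- Let g₁,…,g_k be bijections of a set S, p₁,…,p_k strictly positive reals summing to 1, and μ a probability measure with μ({v}) = Σᵢ pᵢ μ({gᵢ(v)}) for all v ∈ S. If μ has an atom, then the (finite, nonempty) set F = {v : μ({v}) = sup_w μ({w})} of atoms of maximal mass satisfies gᵢ(F) = F for every i. -/
open MeasureTheory

/-- If a measure satisfying `μ({v}) = Σᵢ pᵢ μ({gᵢ(v)})` has an atom, then the finite
nonempty set of atoms of maximal mass is invariant under every `gᵢ`. -/
theorem maximal_atoms_invariant {S : Type*} [MeasurableSpace S] [MeasurableSingletonClass S]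
    (k : ℕ) (g : Fin k → S ≃ S)
    (p : Fin k → ℝ) (hp : ∀ i, 0 < p i) (hp1 : ∑ i, p i = 1)
    (μ : Measure S) [IsProbabilityMeasure μ]
    (hinv : ∀ v : S, (μ {v}).toReal = ∑ i, p i * (μ {g i v}).toReal)
    (hatom : ∃ v : S, 0 < μ {v}) :
    (({v : S | μ {v} = ⨆ w : S, μ {w}}).Finite ∧
      ({v : S | μ {v} = ⨆ w : S, μ {w}}).Nonempty) ∧
    ∀ i, (g i) '' {v : S | μ {v} = ⨆ w : S, μ {w}} = {v : S | μ {v} = ⨆ w : S, μ {w}} := by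
  obtain ⟨v₀, hv₀⟩ := hatom
  set M : ENNReal := ⨆ w : S, μ {w} with hMdef
  have hle1 : ∀ w : S, μ {w} ≤ 1 := fun w => prob_le_one
  have hM1 : M ≤ 1 := iSup_le hle1
  have hMtop : M ≠ ⊤ := (lt_of_le_of_lt hM1 ENNReal.one_lt_top).ne
  have hMfin : ∀ w : S, μ {w} ≠ ⊤ := fun w => (lt_of_le_of_lt (hle1 w) ENNReal.one_lt_top).ne
  have hMpos : 0 < M := lt_of_lt_of_le hv₀ (le_iSup (fun w => μ {w}) v₀)
  -- finiteness of level sets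
  have hfin : ∀ ε : ENNReal, 0 < ε → ({v : S | ε ≤ μ {v}}).Finite := by
    intro ε hε
    by_contra h
    have := Set.Infinite.meas_eq_top (μ := μ) (s := {v : S | ε ≤ μ {v}}) h
      ⟨ε, hε.ne', fun x hx => hx⟩
    exact absurd this (fun H => (lt_of_le_of_lt (H ▸ measure_mono (Set.subset_univ _))
      (lt_of_le_of_lt prob_le_one ENNReal.one_lt_top)).ne rfl)
  set F : Set S := {v : S | μ {v} = M} with hFdef
  -- F is contained in a finite level set, hence finite
  have hFfin : F.Finite := (hfin M hMpos).subset (fun v hv => le_of_eq hv.symm)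
  -- sup is attained
  have hFne : F.Nonempty := by
    have hA : ({v : S | μ {v₀} ≤ μ {v}}).Finite := hfin _ hv₀
    have hAne : ({v : S | μ {v₀} ≤ μ {v}}).Nonempty := ⟨v₀, by simp⟩
    obtain ⟨a, ha, hamax'⟩ := Set.Finite.exists_maximalFor (fun v => μ {v}) _ hA hAne
    have hamax : ∀ w ∈ {v : S | μ {v₀} ≤ μ {v}}, μ {a} ≤ μ {w} → μ {a} = μ {w} :=
      fun w hw h => le_antisymm h (hamax' hw h)
    refine ⟨a, le_antisymm (le_iSup (fun w => μ {w}) a) (iSup_le fun w => ?_)⟩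
    by_cases hw : μ {v₀} ≤ μ {w}
    · by_contra hlt
      exact absurd (hamax w hw (le_of_not_ge hlt)) (fun H => hlt (le_of_eq H.symm))
    · exact (le_of_not_ge hw).trans ha
  refine ⟨⟨hFfin, hFne⟩, fun i => ?_⟩
  -- first show g i '' F ⊆ F
  have hsub : (g i) '' F ⊆ F := by
    rintro _ ⟨v, hv, rfl⟩
    have hvM : μ {v} = M := hv
    -- real-valued comparison
    have hterm : ∀ j, p j * (μ {g j v}).toReal ≤ p j * M.toReal := fun j =>
      mul_le_mul_of_nonneg_left
        (ENNReal.toReal_le_toReal (hMfin _) hMtop |>.mpr (le_iSup (fun w => μ {w}) (g j v)))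
        (hp j).le
    have hsum : ∑ j, p j * (μ {g j v}).toReal = M.toReal := by
      rw [← hinv v, hvM]
    have heq : ∀ j, p j * (μ {g j v}).toReal = p j * M.toReal := by
      have htot : ∑ j, p j * M.toReal = M.toReal := by
        rw [← Finset.sum_mul, hp1, one_mul]
      intro j
      by_contra hne
      have : ∑ j, p j * (μ {g j v}).toReal < ∑ j, p j * M.toReal :=
        Finset.sum_lt_sum (fun j _ => hterm j)
          ⟨j, Finset.mem_univ j, lt_of_le_of_ne (hterm j) hne⟩
      rw [hsum, htot] at this
      exact lt_irrefl _ this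
    have : (μ {g i v}).toReal = M.toReal := by
      have := heq i
      exact mul_left_cancel₀ (hp i).ne' this
    exact (ENNReal.toReal_eq_toReal_iff' (hMfin _) hMtop).mp this
  -- injectivity + finiteness give equality
  have hcard : F.ncard ≤ ((g i) '' F).ncard := by
    rw [Set.ncard_image_of_injective F (g i).injective]
  exact Set.eq_of_subset_of_ncard_le hsub hcard hFfin
end
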